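/- In the inhomogeneous Hamilton algebra IHa(N), the elements J_ij' := J_ij T² + (G_i Q_j − G_j Q_i) T + (F_i P_j − F_j P_i) T + (P_i Q_j − P_j Q_i) R satisfy [J_ij', J_kl] = δ_il J_jk' + δ_jk J_il' − δ_jl J_ik' − δ_ik J_jl' for all indices, i.e. they transform under so(N) like the generators J_ij. -/

import Mathlib

open UniversalEnvelopingAlgebra

set_option maxHeartbeats 1000000

/-- Kronecker delta with values in a field `k`. -/
def kdelta (k : Type*) [Field k] {N : ℕ} (a b : Fin N) : k := if a = b then 1 else 0

/-- In `IHa(N)`, the elements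
`J'_ij = J_ij T² + (G_i Q_j − G_j Q_i)T + (F_i P_j − F_j P_i)T + (P_i Q_j − P_j Q_i)R`
transform under `so(N)` like the generators `J_ij`:
`⁅J'_ij, ι(J_kl)⁆ = δ_il J'_jk + δ_jk J'_il − δ_jl J'_ik − δ_ik J'_jl`. -/
theorem IHa_virtual_copy_transforms_like_soN
    (k : Type*) [Field k] (g : Type*) [LieRing g] [LieAlgebra k g] (N : ℕ)
    (J : Fin N → Fin N → g) (G F Q P : Fin N → g) (R E T : g)
    (hJa : ∀ i j, J i j = -J j i)
    (hJJ : ∀ i j l m, ⁅J i j, J l m⁆ =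
      kdelta k i m • J j l + kdelta k j l • J i m - kdelta k j m • J i l - kdelta k i l • J j m)
    (hJG : ∀ i j l, ⁅J i j, G l⁆ = -(kdelta k i l • G j) + kdelta k j l • G i)
    (hJF : ∀ i j l, ⁅J i j, F l⁆ = -(kdelta k i l • F j) + kdelta k j l • F i)
    (hJQ : ∀ i j l, ⁅J i j, Q l⁆ = -(kdelta k i l • Q j) + kdelta k j l • Q i)
    (hJP : ∀ i j l, ⁅J i j, P l⁆ = -(kdelta k i l • P j) + kdelta k j l • P i)
    (hGF : ∀ i j, ⁅G i, F j⁆ = kdelta k i j • R)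
    (hGQ : ∀ i j, ⁅G i, Q j⁆ = kdelta k i j • T)
    (hFP : ∀ i j, ⁅F i, P j⁆ = kdelta k i j • T)
    (hEG : ∀ i, ⁅E, G i⁆ = -P i) (hEF : ∀ i, ⁅E, F i⁆ = Q i)
    (hER : ⁅E, R⁆ = (2 : k) • T)
    (hGG : ∀ i j, ⁅G i, G j⁆ = 0) (hFF : ∀ i j, ⁅F i, F j⁆ = 0)
    (hQQ : ∀ i j, ⁅Q i, Q j⁆ = 0) (hPP : ∀ i j, ⁅P i, P j⁆ = 0)
    (hGP : ∀ i j, ⁅G i, P j⁆ = 0) (hFQ : ∀ i j, ⁅F i, Q j⁆ = 0)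
    (hQP : ∀ i j, ⁅Q i, P j⁆ = 0)
    (hJR : ∀ i j, ⁅J i j, R⁆ = 0) (hJE : ∀ i j, ⁅J i j, E⁆ = 0)
    (hJT : ∀ i j, ⁅J i j, T⁆ = 0)
    (hGR : ∀ i, ⁅G i, R⁆ = 0) (hFR : ∀ i, ⁅F i, R⁆ = 0)
    (hQR : ∀ i, ⁅Q i, R⁆ = 0) (hPR : ∀ i, ⁅P i, R⁆ = 0)
    (hGT : ∀ i, ⁅G i, T⁆ = 0) (hFT : ∀ i, ⁅F i, T⁆ = 0)
    (hQT : ∀ i, ⁅Q i, T⁆ = 0) (hPT : ∀ i, ⁅P i, T⁆ = 0)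
    (hRT : ⁅R, T⁆ = 0) (hET : ⁅E, T⁆ = 0)
    (hEQ : ∀ i, ⁅E, Q i⁆ = 0) (hEP : ∀ i, ⁅E, P i⁆ = 0)
 :
    ∀ i j l m,
      ⁅(fun a b => (ι k (J a b) : UniversalEnvelopingAlgebra k g) * ι k T ^ 2
      + (ι k (G a) * ι k (Q b) - ι k (G b) * ι k (Q a)) * ι k T
      + (ι k (F a) * ι k (P b) - ι k (F b) * ι k (P a)) * ι k T
      + (ι k (P a) * ι k (Q b) - ι k (P b) * ι k (Q a)) * ι k R) i j, ι k (J l m)⁆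
        = kdelta k i m • ((fun a b => (ι k (J a b) : UniversalEnvelopingAlgebra k g) * ι k T ^ 2
      + (ι k (G a) * ι k (Q b) - ι k (G b) * ι k (Q a)) * ι k T
      + (ι k (F a) * ι k (P b) - ι k (F b) * ι k (P a)) * ι k T
      + (ι k (P a) * ι k (Q b) - ι k (P b) * ι k (Q a)) * ι k R) j l)
          + kdelta k j l • ((fun a b => (ι k (J a b) : UniversalEnvelopingAlgebra k g) * ι k T ^ 2
      + (ι k (G a) * ι k (Q b) - ι k (G b) * ι k (Q a)) * ι k T
      + (ι k (F a) * ι k (P b) - ι k (F b) * ι k (P a)) * ι k T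
      + (ι k (P a) * ι k (Q b) - ι k (P b) * ι k (Q a)) * ι k R) i m)
          - kdelta k j m • ((fun a b => (ι k (J a b) : UniversalEnvelopingAlgebra k g) * ι k T ^ 2
      + (ι k (G a) * ι k (Q b) - ι k (G b) * ι k (Q a)) * ι k T
      + (ι k (F a) * ι k (P b) - ι k (F b) * ι k (P a)) * ι k T
      + (ι k (P a) * ι k (Q b) - ι k (P b) * ι k (Q a)) * ι k R) i l)
          - kdelta k i l • ((fun a b => (ι k (J a b) : UniversalEnvelopingAlgebra k g) * ι k T ^ 2
      + (ι k (G a) * ι k (Q b) - ι k (G b) * ι k (Q a)) * ι k T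
      + (ι k (F a) * ι k (P b) - ι k (F b) * ι k (P a)) * ι k T
      + (ι k (P a) * ι k (Q b) - ι k (P b) * ι k (Q a)) * ι k R) j m) := by
  intro i j l m
  letI : LieRing (UniversalEnvelopingAlgebra k g) := LieRing.ofAssociativeRing
  have mul_lie' : ∀ a b c : UniversalEnvelopingAlgebra k g,
      ⁅a * b, c⁆ = a * ⁅b, c⁆ + ⁅a, c⁆ * b := by
    intro a b c; simp only [Ring.lie_def]; noncomm_ring
  have hmap : ∀ x y : g, ⁅(ι k x : UniversalEnvelopingAlgebra k g), ι k y⁆ = ι k ⁅x, y⁆ :=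
    fun x y => by
      letI : LieRing (UniversalEnvelopingAlgebra k g) := LieRing.ofAssociativeRing
      exact ((ι k).map_lie x y).symm
  have hTJ : ∀ l m, ⁅T, J l m⁆ = 0 := fun l m => by rw [← lie_skew, hJT, neg_zero]
  have hRJ : ∀ l m, ⁅R, J l m⁆ = 0 := fun l m => by rw [← lie_skew, hJR, neg_zero]
  have hGJ : ∀ a l m, ⁅G a, J l m⁆ = kdelta k l a • G m - kdelta k m a • G l := by
    intro a l m; rw [← lie_skew, hJG l m a]; module
  have hFJ : ∀ a l m, ⁅F a, J l m⁆ = kdelta k l a • F m - kdelta k m a • F l := by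
    intro a l m; rw [← lie_skew, hJF l m a]; module
  have hQJ : ∀ a l m, ⁅Q a, J l m⁆ = kdelta k l a • Q m - kdelta k m a • Q l := by
    intro a l m; rw [← lie_skew, hJQ l m a]; module
  have hPJ : ∀ a l m, ⁅P a, J l m⁆ = kdelta k l a • P m - kdelta k m a • P l := by
    intro a l m; rw [← lie_skew, hJP l m a]; module
  have kdelta_comm : ∀ a b : Fin N, kdelta k a b = kdelta k b a := by
    intro a b; simp [kdelta, eq_comm]
  simp only [sq, add_lie, sub_lie, mul_lie', hmap, hTJ, hRJ, hGJ, hFJ, hQJ, hPJ, hJJ,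
    map_add, map_sub, map_smul, map_neg, map_zero, mul_zero, zero_mul, add_zero, zero_add]
  simp only [kdelta_comm l i, kdelta_comm l j, kdelta_comm m i, kdelta_comm m j,
    smul_mul_assoc, mul_smul_comm, mul_assoc, mul_add, add_mul, mul_sub, sub_mul,
    smul_add, smul_sub]
  abel
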